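/- Energy dissipation of the nonlinear midpoint fully discrete DG scheme (identity (3.2) for scheme (3.1)): let Δt > 0, let u⁰, u¹, q⁰, q¹ ∈ V be such that Φ∘u⁰ and Φ∘u¹ are μ-integrable, and let w ∈ L²(μ) satisfy w·(u¹ − u⁰) = Φ∘u¹ − Φ∘u⁰ μ-almost everywhere (w is the difference quotient (Φ(u¹) − Φ(u⁰))/(u¹ − u⁰)). Suppose that for all φ, ψ ∈ V: ⟨(u¹ − u⁰)/Δt, φ⟩ = −A(φ, (q⁰ + q¹)/2) − ⟨w, φ⟩, ⟨q⁰, ψ⟩ = A(u⁰, ψ) and ⟨q¹, ψ⟩ = A(u¹, ψ). Then ∫_Ω Φ(u¹) dμ + (1/2)‖q¹‖² = ∫_Ω Φ(u⁰) dμ + (1/2)‖q⁰‖² − (1/Δt)‖u¹ − u⁰‖². -/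

import Mathlib

open MeasureTheory

/-- Energy dissipation of the nonlinear midpoint fully discrete DG scheme
(identity (3.2) for scheme (3.1)). -/
theorem stmt_9
    {Ω : Type*} [MeasurableSpace Ω] (μ : Measure Ω)
    (V : Submodule ℝ (Lp ℝ 2 μ)) [FiniteDimensional ℝ V]
    (A : V →ₗ[ℝ] V →ₗ[ℝ] ℝ)
    (Φ : ℝ → ℝ)
    (Δt : ℝ) (hΔt : 0 < Δt)
    (u₀ u₁ q₀ q₁ : V)
    (hΦu₀ : Integrable (fun x => Φ ((u₀ : Lp ℝ 2 μ) x)) μ)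
    (hΦu₁ : Integrable (fun x => Φ ((u₁ : Lp ℝ 2 μ) x)) μ)
    (w : Lp ℝ 2 μ)
    (hw : ∀ᵐ x ∂μ,
      w x * ((u₁ : Lp ℝ 2 μ) x - (u₀ : Lp ℝ 2 μ) x)
        = Φ ((u₁ : Lp ℝ 2 μ) x) - Φ ((u₀ : Lp ℝ 2 μ) x))
    (heq1 : ∀ φ : V,
      (inner ℝ ((1/Δt) • ((u₁ : Lp ℝ 2 μ) - (u₀ : Lp ℝ 2 μ))) (φ : Lp ℝ 2 μ) : ℝ)
        = -A φ ((1/2 : ℝ) • (q₀ + q₁)) - (inner ℝ w (φ : Lp ℝ 2 μ) : ℝ))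
    (heq2 : ∀ ψ : V, (inner ℝ (q₀ : Lp ℝ 2 μ) (ψ : Lp ℝ 2 μ) : ℝ) = A u₀ ψ)
    (heq3 : ∀ ψ : V, (inner ℝ (q₁ : Lp ℝ 2 μ) (ψ : Lp ℝ 2 μ) : ℝ) = A u₁ ψ) :
    (∫ x, Φ ((u₁ : Lp ℝ 2 μ) x) ∂μ) + (1/2) * ‖(q₁ : Lp ℝ 2 μ)‖^2
      = (∫ x, Φ ((u₀ : Lp ℝ 2 μ) x) ∂μ) + (1/2) * ‖(q₀ : Lp ℝ 2 μ)‖^2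
        - (1/Δt) * ‖(u₁ : Lp ℝ 2 μ) - (u₀ : Lp ℝ 2 μ)‖^2 := by
  have hd : ((u₁ - u₀ : V) : Lp ℝ 2 μ) = (u₁ : Lp ℝ 2 μ) - u₀ := rfl
  have h1 := heq1 (u₁ - u₀)
  rw [hd] at h1
  have hL : (inner ℝ ((1/Δt) • ((u₁ : Lp ℝ 2 μ) - u₀)) ((u₁ : Lp ℝ 2 μ) - u₀) : ℝ)
      = (1/Δt) * ‖(u₁ : Lp ℝ 2 μ) - (u₀ : Lp ℝ 2 μ)‖^2 := by
    rw [real_inner_smul_left, real_inner_self_eq_norm_sq]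
  have hA : A (u₁ - u₀) ((1/2 : ℝ) • (q₀ + q₁))
      = (1/2) * (‖(q₁ : Lp ℝ 2 μ)‖^2 - ‖(q₀ : Lp ℝ 2 μ)‖^2) := by
    have e1 : A (u₁ - u₀) ((1/2 : ℝ) • (q₀ + q₁))
        = (1/2) * (A u₁ q₀ + A u₁ q₁ - (A u₀ q₀ + A u₀ q₁)) := by
      simp only [map_sub, LinearMap.sub_apply, LinearMap.map_smul, map_add, smul_eq_mul]
      ring
    rw [e1, ← heq2, ← heq2, ← heq3, ← heq3, real_inner_self_eq_norm_sq,
      real_inner_self_eq_norm_sq, real_inner_comm (q₀ : Lp ℝ 2 μ)]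
    ring
  have hw2 : (inner ℝ w ((u₁ : Lp ℝ 2 μ) - u₀) : ℝ)
      = (∫ x, Φ ((u₁ : Lp ℝ 2 μ) x) ∂μ) - ∫ x, Φ ((u₀ : Lp ℝ 2 μ) x) ∂μ := by
    rw [L2.inner_def, ← integral_sub hΦu₁ hΦu₀]
    apply integral_congr_ae
    filter_upwards [hw, Lp.coeFn_sub (u₁ : Lp ℝ 2 μ) u₀] with x hx h2
    simp only [RCLike.inner_apply, conj_trivial, h2, Pi.sub_apply]
    rw [← hx, mul_comm]
  rw [hL, hA, hw2] at h1
  linarith
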